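/- The number of A-orbits on S equals the number of A-orbits on T. -/

import Mathlib

open MulAction

/-- Square-case trace lemma. -/
theorem auxFixSquare {ι : Type} [Fintype ι] [DecidableEq ι]
    (M : Matrix ι ι ℂ) (hM : IsUnit M)
    (p q : Equiv.Perm ι) (h : ∀ i j, M (p i) (q j) = M i j) :
    (Function.fixedPoints p).ncard = (Function.fixedPoints q).ncard := by
  have hdet : IsUnit M.det := (Matrix.isUnit_iff_isUnit_det M).1 hM
  have key : (p.permMatrix ℂ) * M * ((q⁻¹).permMatrix ℂ) = M := by
    rw [Equiv.Perm.permMatrix, Equiv.Perm.permMatrix, PEquiv.toMatrix_toPEquiv_mul,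
      PEquiv.mul_toMatrix_toPEquiv]
    ext i j
    simp only [Matrix.submatrix_apply, id_eq]
    have : (q⁻¹ : Equiv.Perm ι).symm j = q j := rfl
    rw [this, h]
  have hq1 : ((q⁻¹).permMatrix ℂ) * (q.permMatrix ℂ) = 1 := by
    rw [Equiv.Perm.permMatrix, PEquiv.toMatrix_toPEquiv_mul]
    ext i j
    simp [Equiv.Perm.permMatrix, PEquiv.toMatrix_apply, Equiv.toPEquiv_apply,
      Matrix.one_apply, Matrix.submatrix_apply, Equiv.eq_symm_apply, eq_comm]
  have key2 : (p.permMatrix ℂ) * M = M * (q.permMatrix ℂ) := by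
    calc (p.permMatrix ℂ) * M
        = ((p.permMatrix ℂ) * M * ((q⁻¹).permMatrix ℂ)) * (q.permMatrix ℂ) := by
          rw [Matrix.mul_assoc ((p.permMatrix ℂ) * M), hq1, Matrix.mul_one]
      _ = M * (q.permMatrix ℂ) := by rw [key]
  have htr : Matrix.trace (p.permMatrix ℂ) = Matrix.trace (q.permMatrix ℂ) := by
    have : (p.permMatrix ℂ) = M * (q.permMatrix ℂ) * M⁻¹ := by
      rw [← key2, Matrix.mul_assoc, Matrix.mul_nonsing_inv _ hdet, Matrix.mul_one]
    rw [this, Matrix.trace_mul_comm, ← Matrix.mul_assoc, Matrix.nonsing_inv_mul _ hdet,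
      Matrix.one_mul]
  have := htr
  rw [Matrix.trace_permutation, Matrix.trace_permutation] at this
  exact_mod_cast this

/-- Rectangular version via an equivalence of index types. -/
theorem auxFix {ι κ : Type} [Fintype ι] [Fintype κ] [DecidableEq ι] [DecidableEq κ]
    (M : Matrix ι κ ℂ) (hM : Function.Bijective M.mulVec) (e : ι ≃ κ)
    (p : Equiv.Perm ι) (q : Equiv.Perm κ) (h : ∀ i j, M (p i) (q j) = M i j) :
    (Function.fixedPoints p).ncard = (Function.fixedPoints q).ncard := by
  set N : Matrix ι ι ℂ := M.submatrix id e with hN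
  have hmv : ∀ v : ι → ℂ, N.mulVec v = M.mulVec (fun k => v (e.symm k)) := by
    intro v
    funext i
    simp only [Matrix.mulVec, dotProduct, hN, Matrix.submatrix_apply, id_eq]
    exact Fintype.sum_equiv e _ _ (fun j => by simp)
  have hNinj : Function.Injective N.mulVec := by
    intro v w hvw
    rw [hmv, hmv] at hvw
    have := hM.injective hvw
    funext i
    have := congrFun this (e i)
    simpa using this
  have hNunit : IsUnit N := Matrix.mulVec_injective_iff_isUnit.1 hNinj
  set q' : Equiv.Perm ι := e.symm.permCongr q with hq'
  have happ : ∀ i, q' i = e.symm (q (e i)) := fun i => rfl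
  have h' : ∀ i j, N (p i) (q' j) = N i j := by
    intro i j
    simp only [hN, Matrix.submatrix_apply, id_eq, happ, Equiv.apply_symm_apply]
    exact h i (e j)
  have hsq := auxFixSquare N hNunit p q' h'
  rw [hsq]
  have himg : Function.fixedPoints q = e '' Function.fixedPoints q' := by
    ext k
    constructor
    · intro hk
      refine ⟨e.symm k, ?_, by simp⟩
      show q' (e.symm k) = e.symm k
      rw [happ]
      simp [Function.IsFixedPt] at hk
      simp [hk]
    · rintro ⟨i, hi, rfl⟩
      have : q' i = i := hi
      rw [happ] at this
      show q (e i) = e i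
      have := congrArg e this
      simpa using this
  rw [himg, Set.ncard_image_of_injective _ e.injective]

/-- Burnside-type comparison: if two actions of the same group on finite sets have
equally many fixed points for every group element, they have equally many orbits. -/
theorem auxBurnside {A : Type*} [Group A] {X Y : Type} [Fintype X] [Fintype Y]
    [MulAction A X] [MulAction A Y]
    (h : ∀ a : A, Nat.card (fixedBy X a) = Nat.card (fixedBy Y a)) :
    Nat.card (orbitRel.Quotient A X) = Nat.card (orbitRel.Quotient A Y) := by
  classical
  set f : A →* Equiv.Perm X × Equiv.Perm Y :=
    (MulAction.toPermHom A X).prod (MulAction.toPermHom A Y) with hf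
  set H := f.range with hH
  letI : MulAction H X :=
    { smul := fun h x => (h : Equiv.Perm X × Equiv.Perm Y).1 x
      one_smul := fun x => by
        show ((1 : H) : Equiv.Perm X × Equiv.Perm Y).1 x = x
        simp
      mul_smul := fun g h x => by
        show ((g * h : H) : Equiv.Perm X × Equiv.Perm Y).1 x = _
        simp [Equiv.Perm.mul_apply]
        rfl }
  letI : MulAction H Y :=
    { smul := fun h y => (h : Equiv.Perm X × Equiv.Perm Y).2 y
      one_smul := fun y => by
        show ((1 : H) : Equiv.Perm X × Equiv.Perm Y).2 y = y
        simp
      mul_smul := fun g h y => by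
        show ((g * h : H) : Equiv.Perm X × Equiv.Perm Y).2 y = _
        simp [Equiv.Perm.mul_apply]
        rfl }
  have hsmulX : ∀ (a : A) (x : X), (⟨f a, ⟨a, rfl⟩⟩ : H) • x = a • x := fun a x => rfl
  have hsmulY : ∀ (a : A) (y : Y), (⟨f a, ⟨a, rfl⟩⟩ : H) • y = a • y := fun a y => rfl
  have hfinH : Finite H := by infer_instance
  haveI : Fintype H := Fintype.ofFinite H
  haveI : Fintype (orbitRel.Quotient H X) := Fintype.ofFinite _
  haveI : Fintype (orbitRel.Quotient H Y) := Fintype.ofFinite _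
  -- fixed point counts match over H
  have hfixH : ∀ g : H, Nat.card (fixedBy X g) = Nat.card (fixedBy Y g) := by
    rintro ⟨g, a, rfl⟩
    have hx : fixedBy X (⟨f a, ⟨a, rfl⟩⟩ : H) = fixedBy X a := by
      ext x; show (⟨f a, ⟨a, rfl⟩⟩ : H) • x = x ↔ a • x = x; rw [hsmulX]
    have hy : fixedBy Y (⟨f a, ⟨a, rfl⟩⟩ : H) = fixedBy Y a := by
      ext y; show (⟨f a, ⟨a, rfl⟩⟩ : H) • y = y ↔ a • y = y; rw [hsmulY]
    rw [hx, hy]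
    exact h a
  -- Burnside on both sides
  have hbX := MulAction.sum_card_fixedBy_eq_card_orbits_mul_card_group (G := H) (X := X)
  have hbY := MulAction.sum_card_fixedBy_eq_card_orbits_mul_card_group (G := H) (X := Y)
  have hsum : (∑ g : H, Fintype.card (fixedBy X g)) = ∑ g : H, Fintype.card (fixedBy Y g) := by
    apply Finset.sum_congr rfl
    intro g _
    have := hfixH g
    rwa [Nat.card_eq_fintype_card, Nat.card_eq_fintype_card] at this
  have hcards : Fintype.card (orbitRel.Quotient H X) = Fintype.card (orbitRel.Quotient H Y) := by
    have hpos : 0 < Fintype.card H := Fintype.card_pos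
    have := hbX.symm.trans (hsum.trans hbY)
    exact Nat.eq_of_mul_eq_mul_right hpos this
  -- orbit quotients over H and A coincide
  have hsetX : orbitRel A X = orbitRel H X := by
    apply Setoid.ext
    intro x y
    rw [orbitRel_apply, orbitRel_apply, MulAction.mem_orbit_iff, MulAction.mem_orbit_iff]
    constructor
    · rintro ⟨a, ha⟩; exact ⟨⟨f a, ⟨a, rfl⟩⟩, by rw [hsmulX]; exact ha⟩
    · rintro ⟨⟨g, a, rfl⟩, ha⟩; exact ⟨a, by rw [hsmulX] at ha; exact ha⟩
  have hsetY : orbitRel A Y = orbitRel H Y := by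
    apply Setoid.ext
    intro x y
    rw [orbitRel_apply, orbitRel_apply, MulAction.mem_orbit_iff, MulAction.mem_orbit_iff]
    constructor
    · rintro ⟨a, ha⟩; exact ⟨⟨f a, ⟨a, rfl⟩⟩, by rw [hsmulY]; exact ha⟩
    · rintro ⟨⟨g, a, rfl⟩, ha⟩; exact ⟨a, by rw [hsmulY] at ha; exact ha⟩
  have : orbitRel.Quotient A X = orbitRel.Quotient H X := by
    unfold orbitRel.Quotient; rw [hsetX]
  have hYq : orbitRel.Quotient A Y = orbitRel.Quotient H Y := by
    unfold orbitRel.Quotient; rw [hsetY]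
  rw [this, hYq, Nat.card_eq_fintype_card, Nat.card_eq_fintype_card, hcards]

/-- The collection of orbit-sets (pushed into an ambient type by an injection) is in
bijection with the orbit quotient. -/
theorem auxOrbitSets {A X Y : Type*} [Group A] [MulAction A X] (f : X → Y)
    (hf : Function.Injective f) :
    Nat.card {O : Set Y | ∃ x : X, O = {y | ∃ a : A, y = f (a • x)}}
      = Nat.card (orbitRel.Quotient A X) := by
  have hg : ∀ x x' : X, orbitRel A X x x' →
      (⟨{y | ∃ a : A, y = f (a • x)}, x, rfl⟩ :
        {O : Set Y | ∃ x : X, O = {y | ∃ a : A, y = f (a • x)}}) = ⟨{y | ∃ a : A, y = f (a • x')}, x', rfl⟩ := by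
    intro x x' hrel
    rw [orbitRel_apply, MulAction.mem_orbit_iff] at hrel
    obtain ⟨a, rfl⟩ := hrel
    apply Subtype.ext
    ext y
    constructor
    · rintro ⟨b, rfl⟩
      exact ⟨b * a, by rw [mul_smul]⟩
    · rintro ⟨b, rfl⟩
      exact ⟨b * a⁻¹, by rw [mul_smul, inv_smul_smul]⟩
  let F : orbitRel.Quotient A X → {O : Set Y | ∃ x : X, O = {y | ∃ a : A, y = f (a • x)}} :=
    Quotient.lift _ hg
  have hFb : Function.Bijective F := by
    constructor
    · intro q1 q2
      induction q1 using Quotient.inductionOn with | h x =>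
      induction q2 using Quotient.inductionOn with | h x' =>
      intro hFe
      have hsets : {y | ∃ a : A, y = f (a • x)} = {y | ∃ a : A, y = f (a • x')} :=
        congrArg Subtype.val hFe
      have hmem : f x ∈ {y | ∃ a : A, y = f (a • x)} := ⟨1, by rw [one_smul]⟩
      rw [hsets] at hmem
      obtain ⟨a, ha⟩ := hmem
      have hx : x = a • x' := hf ha
      exact Quotient.sound (orbitRel_apply.mpr (MulAction.mem_orbit_iff.mpr ⟨a, hx.symm⟩))
    · rintro ⟨O, x, rfl⟩
      exact ⟨Quotient.mk _ x, rfl⟩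
  exact (Nat.card_congr (Equiv.ofBijective F hFb)).symm

/-- **Block form of the Brauer Permutation Lemma (orbit count).**
Let `G` be a finite group and let a group `A` act on `G` by automorphisms via
`φ : A →* MulAut G`; `A` acts on irreducible complex characters by
`(a • χ) g = χ ((φ a)⁻¹ g)` and on conjugacy classes by `a • C = (φ a) '' C`.
Let `S` be an `A`-invariant set of irreducible complex characters of `G` and
`T` an `A`-invariant set of conjugacy classes of `G` with `|S| = |T| = m`, and
suppose the `m × m` matrix `(χ(C))_{χ ∈ S, C ∈ T}` (where `χ(C)` is the common
value of `χ` on the class `C`) is invertible.  Then the number of `A`-orbits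
on `S` equals the number of `A`-orbits on `T`. -/
theorem stmt6 {G : Type} [Group G] [Fintype G] {A : Type*} [Group A]
    (φ : A →* MulAut G)
    (S : Set (G → ℂ)) (T : Set (Set G)) [Fintype ↥S] [Fintype ↥T]
    (hS : ∀ χ ∈ S, ∃ V : FDRep ℂ G, CategoryTheory.Simple V ∧ χ = V.character)
    (hT : ∀ C ∈ T, ∃ g : G, C = {h : G | IsConj g h})
    (hSinv : ∀ (a : A), ∀ χ ∈ S, (fun g : G => χ ((φ a)⁻¹ g)) ∈ S)
    (hTinv : ∀ (a : A), ∀ C ∈ T, (φ a) '' C ∈ T)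
    (m : ℕ) (hSm : Nat.card ↥S = m) (hTm : Nat.card ↥T = m)
    (M : Matrix ↥S ↥T ℂ)
    (hM : ∀ (χ : ↥S) (C : ↥T) (g : G), g ∈ (C : Set G) → M χ C = (χ : G → ℂ) g)
    (hMinv : Function.Bijective M.mulVec) :
    Nat.card {O : Set (G → ℂ) | ∃ χ ∈ S,
        O = {ψ : G → ℂ | ∃ a : A, ψ = fun g : G => χ ((φ a)⁻¹ g)}}
      = Nat.card {P : Set (Set G) | ∃ C ∈ T,
        P = {D : Set G | ∃ a : A, D = (φ a) '' C}} := by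
  classical
  letI : SMul A ↥S := ⟨fun a χ => ⟨fun g => (χ : G → ℂ) ((φ a)⁻¹ g), hSinv a χ.1 χ.2⟩⟩
  letI : MulAction A ↥S :=
    { one_smul := by
        intro χ
        apply Subtype.ext
        funext g
        show (χ : G → ℂ) ((φ 1)⁻¹ g) = (χ : G → ℂ) g
        rw [map_one]
        simp
      mul_smul := by
        intro a b χ
        apply Subtype.ext
        funext g
        show (χ : G → ℂ) ((φ (a * b))⁻¹ g) = (χ : G → ℂ) ((φ b)⁻¹ ((φ a)⁻¹ g))
        rw [map_mul, mul_inv_rev]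
        rfl }
  letI : SMul A ↥T := ⟨fun a C => ⟨(φ a) '' C, hTinv a C.1 C.2⟩⟩
  letI : MulAction A ↥T :=
    { one_smul := by
        intro C
        apply Subtype.ext
        show (φ 1) '' (C : Set G) = (C : Set G)
        rw [map_one]
        simp
      mul_smul := by
        intro a b C
        apply Subtype.ext
        show (φ (a * b)) '' (C : Set G) = (φ a) '' ((φ b) '' (C : Set G))
        rw [map_mul, ← Set.image_comp]
        rfl }
  have ecard : Fintype.card ↥S = Fintype.card ↥T := by
    rw [← Nat.card_eq_fintype_card, ← Nat.card_eq_fintype_card, hSm, hTm]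
  let e : ↥S ≃ ↥T := Fintype.equivOfCardEq ecard
  have hfix : ∀ a : A, Nat.card (MulAction.fixedBy ↥S a) = Nat.card (MulAction.fixedBy ↥T a) := by
    intro a
    have hMa : ∀ (χ : ↥S) (C : ↥T),
        M (MulAction.toPerm a χ) (MulAction.toPerm a C) = M χ C := by
      intro χ C
      obtain ⟨g, hg⟩ := hT C.1 C.2
      have hgC : g ∈ (C : Set G) := by rw [hg]; exact IsConj.refl g
      have hmem : (φ a) g ∈ ((a • C : ↥T) : Set G) := ⟨g, hgC, rfl⟩
      rw [show (MulAction.toPerm a C : ↥T) = a • C from rfl,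
        show (MulAction.toPerm a χ : ↥S) = a • χ from rfl,
        hM (a • χ) (a • C) ((φ a) g) hmem, hM χ C g hgC]
      show (χ : G → ℂ) ((φ a)⁻¹ ((φ a) g)) = (χ : G → ℂ) g
      congr 1
      simp
    have h := auxFix M hMinv e (MulAction.toPerm a) (MulAction.toPerm a) hMa
    have h1 : Function.fixedPoints (MulAction.toPerm a : Equiv.Perm ↥S)
        = MulAction.fixedBy ↥S a := by
      ext x; simp [Function.IsFixedPt, MulAction.fixedBy]
    have h2 : Function.fixedPoints (MulAction.toPerm a : Equiv.Perm ↥T)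
        = MulAction.fixedBy ↥T a := by
      ext x; simp [Function.IsFixedPt, MulAction.fixedBy]
    rw [h1, h2] at h
    rw [Nat.card_coe_set_eq, Nat.card_coe_set_eq]
    exact h
  have hq := auxBurnside (A := A) (X := ↥S) (Y := ↥T) hfix
  have hSset : {O : Set (G → ℂ) | ∃ χ ∈ S,
        O = {ψ : G → ℂ | ∃ a : A, ψ = fun g : G => χ ((φ a)⁻¹ g)}}
      = {O : Set (G → ℂ) | ∃ x : ↥S,
        O = {ψ | ∃ a : A, ψ = Subtype.val (a • x)}} := by
    ext O
    constructor
    · rintro ⟨χ, hχ, rfl⟩; exact ⟨⟨χ, hχ⟩, rfl⟩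
    · rintro ⟨x, rfl⟩; exact ⟨x.1, x.2, rfl⟩
  have hTset : {P : Set (Set G) | ∃ C ∈ T,
        P = {D : Set G | ∃ a : A, D = (φ a) '' C}}
      = {P : Set (Set G) | ∃ x : ↥T,
        P = {D | ∃ a : A, D = Subtype.val (a • x)}} := by
    ext P
    constructor
    · rintro ⟨C, hC, rfl⟩; exact ⟨⟨C, hC⟩, rfl⟩
    · rintro ⟨x, rfl⟩; exact ⟨x.1, x.2, rfl⟩
  rw [hSset, hTset,
    auxOrbitSets (A := A) (Subtype.val : ↥S → (G → ℂ)) Subtype.val_injective,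
    auxOrbitSets (A := A) (Subtype.val : ↥T → Set G) Subtype.val_injective, hq]
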